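/- Let a, c > 0, k > 0, 0 < V_ci < V_r, and let i be a positive integer. Then (k/(3·a^{k/3}·c^k))·∫_{a·V_ci³}^{a·V_r³} x^{k/3 + i − 1}·exp(−x^{k/3}/(a^{k/3}·c^k)) dx = a^i·c^{3i}·[γ(1 + 3i/k, (V_r/c)^k) − γ(1 + 3i/k, (V_ci/c)^k)]. Equivalently, if V is a Weibull random variable with scale c and shape k, the i-th moment of the harvested wind power restricted to the continuous range satisfies E[(a·V³)^i·1_{V_ci < V ≤ V_r}] = a^i·c^{3i}·[γ(1 + 3i/k, (V_r/c)^k) − γ(1 + 3i/k, (V_ci/c)^k)]. (i-th moment of the harvested wind power.) -/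

import Mathlib

open MeasureTheory Real

/-- The lower incomplete gamma function `γ(s, x) = ∫₀ˣ t^{s−1}·e^{−t} dt`. -/
noncomputable def lowerGamma (s x : ℝ) : ℝ :=
  ∫ t in (0 : ℝ)..x, t ^ (s - 1) * Real.exp (-t)

/-- Weibull density with scale `c > 0` and shape `k > 0` (zero for `v ≤ 0`). -/
noncomputable def weibullDensity (c k v : ℝ) : ℝ :=
  if 0 < v then (k / c) * (v / c) ^ (k - 1) * Real.exp (-(v / c) ^ k) else 0

/-- **`i`-th moment of the harvested wind power.**
`(k/(3·a^{k/3}·c^k))·∫_{a·V_ci³}^{a·V_r³} x^{k/3+i−1}·exp(−x^{k/3}/(a^{k/3}·c^k)) dx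
 = a^i·c^{3i}·[γ(1+3i/k, (V_r/c)^k) − γ(1+3i/k, (V_ci/c)^k)]`, and equivalently,
for a Weibull wind speed `V`,
`E[(a·V³)^i·1_{V_ci < V ≤ V_r}]` equals the same closed form. -/
theorem wind_power_moment
    {Ω : Type*} [MeasurableSpace Ω] (μ : Measure Ω) [IsProbabilityMeasure μ]
    (a c k Vci Vr : ℝ) (ha : 0 < a) (hc : 0 < c) (hk : 0 < k)
    (hVci : 0 < Vci) (hVr : Vci < Vr)
    (i : ℕ) (hi : 0 < i)
    (V : Ω → ℝ) (hV : Measurable V)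
    (hlaw : μ.map V = volume.withDensity fun v => ENNReal.ofReal (weibullDensity c k v)) :
    (k / (3 * a ^ (k / 3) * c ^ k))
        * ∫ x in (a * Vci ^ 3)..(a * Vr ^ 3),
            x ^ (k / 3 + i - 1) * Real.exp (-x ^ (k / 3) / (a ^ (k / 3) * c ^ k)) =
      a ^ i * c ^ (3 * i)
        * (lowerGamma (1 + 3 * i / k) ((Vr / c) ^ k)
          - lowerGamma (1 + 3 * i / k) ((Vci / c) ^ k)) ∧
    ∫ ω in {ω | Vci < V ω ∧ V ω ≤ Vr}, (a * V ω ^ 3) ^ i ∂μ =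
      a ^ i * c ^ (3 * i)
        * (lowerGamma (1 + 3 * i / k) ((Vr / c) ^ k)
          - lowerGamma (1 + 3 * i / k) ((Vci / c) ^ k)) := by
  have hVr0 : 0 < Vr := hVci.trans hVr
  set p : ℝ := 3 * i / k with hp
  have hp0 : 0 < p := by positivity
  have hgc : Continuous fun t : ℝ => t ^ p * Real.exp (-t) :=
    (Real.continuous_rpow_const hp0.le).mul (Real.continuous_exp.comp continuous_neg)
  -- the γ-difference as an interval integral
  have hγ : lowerGamma (1 + p) ((Vr / c) ^ k) - lowerGamma (1 + p) ((Vci / c) ^ k)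
      = ∫ t in ((Vci / c) ^ k)..((Vr / c) ^ k), t ^ p * Real.exp (-t) := by
    unfold lowerGamma
    simp_rw [show (1:ℝ) + p - 1 = p by ring]
    exact intervalIntegral.integral_interval_sub_left
      (hgc.intervalIntegrable _ _) (hgc.intervalIntegrable _ _)
  rw [hγ]
  constructor
  · -- Part 1: substitution t = x^{k/3}/(a^{k/3} c^k)
    set A : ℝ := a ^ (k/3) * c ^ k with hA
    have hA0 : 0 < A := by positivity
    set φ : ℝ → ℝ := fun x => x ^ (k/3) / A with hφ
    set φ' : ℝ → ℝ := fun x => (k/3 * x ^ (k/3 - 1)) / A with hφ'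
    set lo : ℝ := a * Vci ^ 3 with hlo
    set hi' : ℝ := a * Vr ^ 3 with hhi
    have hlo0 : 0 < lo := by positivity
    have hle : lo ≤ hi' := by
      have h3 : Vci ^ 3 ≤ Vr ^ 3 := pow_le_pow_left₀ hVci.le hVr.le 3
      exact mul_le_mul_of_nonneg_left h3 ha.le
    have huIcc : Set.uIcc lo hi' = Set.Icc lo hi' := Set.uIcc_of_le hle
    have hpos : ∀ x ∈ Set.uIcc lo hi', 0 < x := by
      rw [huIcc]; intro x hx; exact lt_of_lt_of_le hlo0 hx.1
    have hderiv : ∀ x ∈ Set.uIcc lo hi', HasDerivAt φ (φ' x) x := by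
      intro x hx
      exact (Real.hasDerivAt_rpow_const (Or.inl (hpos x hx).ne')).div_const A
    have hcont : ContinuousOn φ' (Set.uIcc lo hi') := by
      intro x hx
      have h1 : ContinuousAt (fun y : ℝ => y ^ (k/3 - 1)) x :=
        Real.continuousAt_rpow_const x _ (Or.inl (hpos x hx).ne')
      exact ((continuousAt_const.mul h1).div_const A).continuousWithinAt
    have hφv : ∀ v : ℝ, 0 < v → φ (a * v ^ 3) = (v / c) ^ k := by
      intro v hv
      have h1 : (a * v ^ 3) ^ (k/3) = a ^ (k/3) * v ^ k := by
        have h3 : ((3:ℕ):ℝ) * (k/3) = k := by push_cast; field_simp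
        rw [Real.mul_rpow ha.le (by positivity), ← Real.rpow_natCast v 3,
          ← Real.rpow_mul hv.le, h3]
      simp only [hφ, h1, hA, Real.div_rpow hv.le hc.le]
      field_simp
    have hAp : A ^ p = a ^ i * c ^ (3 * i) := by
      rw [hA, Real.mul_rpow (by positivity) (by positivity),
        ← Real.rpow_mul ha.le, ← Real.rpow_mul hc.le]
      have h1 : k / 3 * p = (i : ℝ) := by rw [hp]; field_simp
      have h2 : k * p = ((3 * i : ℕ) : ℝ) := by rw [hp]; push_cast; field_simp
      rw [h1, h2, Real.rpow_natCast, Real.rpow_natCast]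
    have key : ∀ x ∈ Set.uIcc lo hi',
        (k / (3 * a ^ (k/3) * c ^ k)) * (x ^ (k/3 + i - 1) * Real.exp (-x ^ (k/3) / A)) =
        a ^ i * c ^ (3 * i) * (φ' x • ((fun t => t ^ p * Real.exp (-t)) ∘ φ) x) := by
      intro x hx
      have hx0 := hpos x hx
      have hφxp : (φ x) ^ p = x ^ (i : ℕ) / (a ^ i * c ^ (3 * i)) := by
        simp only [hφ, Real.div_rpow (Real.rpow_nonneg hx0.le _) hA0.le,
          ← Real.rpow_natCast x i, ← Real.rpow_mul hx0.le, hAp]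
        congr 2
        field_simp [hp]
        rw [hp]; field_simp
      have hxsplit : x ^ (k/3 + i - 1) = x ^ (k/3 - 1) * x ^ (i : ℕ) := by
        rw [← Real.rpow_natCast x i, ← Real.rpow_add hx0]
        ring_nf
      simp only [Function.comp, smul_eq_mul, hφxp]
      simp only [hxsplit, hφ', hφ]
      have hac : (0:ℝ) < a ^ i * c ^ (3 * i) := by positivity
      rw [show (3 : ℝ) * a ^ (k/3) * c ^ k = 3 * A by rw [hA]; ring]
      field_simp
    rw [← intervalIntegral.integral_const_mul, intervalIntegral.integral_congr key,
      intervalIntegral.integral_const_mul,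
      intervalIntegral.integral_comp_smul_deriv' hderiv hcont (hgc.continuousOn),
      hφv Vci hVci, hφv Vr hVr0]
  · -- Part 2: the moment against the Weibull law, substitution t = (v/c)^k
    have hdnn : ∀ v, 0 ≤ weibullDensity c k v := by
      intro v
      unfold weibullDensity
      split
      · positivity
      · exact le_rfl
    have hdm : Measurable (weibullDensity c k) := by
      unfold weibullDensity
      apply Measurable.ite (measurableSet_lt measurable_const measurable_id)
      · exact ((measurable_const.mul ((measurable_id.div_const c).pow_const _)).mul
          (((measurable_id.div_const c).pow_const _).neg.exp))
      · exact measurable_const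
    have hset : {ω | Vci < V ω ∧ V ω ≤ Vr} = V ⁻¹' Set.Ioc Vci Vr := rfl
    have hcontg : Continuous fun v : ℝ => (a * v ^ 3) ^ i := by continuity
    rw [hset, ← setIntegral_map measurableSet_Ioc
      (hcontg.aestronglyMeasurable) hV.aemeasurable, hlaw]
    have hofr : (fun v => ENNReal.ofReal (weibullDensity c k v))
        = fun v => ((weibullDensity c k v).toNNReal : ENNReal) := rfl
    rw [hofr, setIntegral_withDensity_eq_setIntegral_smul
      (hdm.real_toNNReal) _ measurableSet_Ioc]
    have hsmul : ∀ v : ℝ, (weibullDensity c k v).toNNReal • ((a * v ^ 3) ^ i : ℝ)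
        = weibullDensity c k v * (a * v ^ 3) ^ i := by
      intro v
      rw [NNReal.smul_def, Real.coe_toNNReal _ (hdnn v), smul_eq_mul]
    simp_rw [hsmul]
    rw [← intervalIntegral.integral_of_le hVr.le]
    set ψ : ℝ → ℝ := fun v => (v / c) ^ k with hψ
    set ψ' : ℝ → ℝ := fun v => 1 / c * k * (v / c) ^ (k - 1) with hψ'
    have huIcc : Set.uIcc Vci Vr = Set.Icc Vci Vr := Set.uIcc_of_le hVr.le
    have hpos : ∀ v ∈ Set.uIcc Vci Vr, 0 < v := by
      rw [huIcc]; intro v hv; exact lt_of_lt_of_le hVci hv.1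
    have hderiv : ∀ v ∈ Set.uIcc Vci Vr, HasDerivAt ψ (ψ' v) v := by
      intro v hv
      have hv0 := hpos v hv
      have hvc : (0:ℝ) < v / c := div_pos hv0 hc
      have h1 : HasDerivAt (fun y : ℝ => y / c) (1 / c) v := by
        simpa using (hasDerivAt_id v).div_const c
      have := h1.rpow_const (p := k) (Or.inl hvc.ne')
      simpa [hψ', mul_comm, mul_assoc] using this
    have hcont : ContinuousOn ψ' (Set.uIcc Vci Vr) := by
      intro v hv
      have hv0 := hpos v hv
      have hvc : (0:ℝ) < v / c := div_pos hv0 hc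
      have h0 : ContinuousAt (fun y : ℝ => y / c) v := continuousAt_id.div_const c
      have h1 : ContinuousAt (fun y : ℝ => (y / c) ^ (k - 1)) v :=
        h0.rpow_const (Or.inl hvc.ne')
      exact (continuousAt_const.mul h1).continuousWithinAt
    have key : ∀ v ∈ Set.uIcc Vci Vr,
        weibullDensity c k v * (a * v ^ 3) ^ i =
        a ^ i * c ^ (3 * i) * (ψ' v • ((fun t => t ^ p * Real.exp (-t)) ∘ ψ) v) := by
      intro v hv
      have hv0 := hpos v hv
      have hvc : (0:ℝ) < v / c := div_pos hv0 hc
      have hψp : (ψ v) ^ p = (v / c) ^ (3 * i : ℕ) := by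
        rw [hψ, ← Real.rpow_mul hvc.le]
        rw [show k * p = ((3 * i : ℕ) : ℝ) by rw [hp]; push_cast; field_simp,
          Real.rpow_natCast]
      have hwd : weibullDensity c k v
          = (k / c) * (v / c) ^ (k - 1) * Real.exp (-(v / c) ^ k) := if_pos hv0
      simp only [Function.comp, smul_eq_mul, hψp]
      simp only [hwd, hψ', hψ]
      rw [div_pow v c, mul_pow a (v ^ 3) i, ← pow_mul v 3 i]
      field_simp
    rw [intervalIntegral.integral_congr key, intervalIntegral.integral_const_mul,
      intervalIntegral.integral_comp_smul_deriv' hderiv hcont (hgc.continuousOn)]
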